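/- Let R be a Dedekind domain and S an overring of R with extension map on fractional ideals ι₊(I) = IS and contraction ι* on primes. Then ι₊ ∘ ι* is the identity on the set of nonzero prime ideals of S. -/

import Mathlib

open nonZeroDivisors

/-- Let `R` be a Dedekind domain with fraction field `K` and `S` an overring of `R`,
with extension map `ι₊(I) = IS` on ideals and contraction `ι⋆(𝒫) = 𝒫 ∩ R`.  Then
`ι₊ ∘ ι⋆` is the identity on nonzero prime ideals of `S`. -/
theorem overring_map_comap_eq_id_on_primes (R : Type*) [CommRing R] [IsDomain R]
    [IsDedekindDomain R] (K : Type*) [Field K] [Algebra R K] [IsFractionRing R K]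
    (S : Subalgebra R K) :
    ∀ P : Ideal S, P.IsPrime → P ≠ ⊥ →
      (P.comap (algebraMap R S)).map (algebraMap R S) = P := by
  intro P hP hP0
  set f : R →+* S := algebraMap R S with hf
  set p : Ideal R := P.comap f with hpdef
  haveI : P.IsPrime := hP
  haveI hp_prime : p.IsPrime := Ideal.IsPrime.comap f
  have hcoe : ∀ r : R, ((f r : S) : K) = algebraMap R K r := fun r => rfl
  -- p ≠ ⊥
  have hp0 : p ≠ ⊥ := by
    obtain ⟨x, hxP, hx0⟩ := Submodule.exists_mem_ne_zero_of_ne_bot hP0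
    obtain ⟨a, b, hb, hab⟩ := IsFractionRing.div_surjective (A := R) ((x : S) : K)
    have hb0 : algebraMap R K b ≠ 0 :=
      IsFractionRing.to_map_ne_zero_of_mem_nonZeroDivisors hb
    have hfa : f a = f b * x := by
      apply Subtype.ext
      push_cast
      rw [hcoe, hcoe]
      field_simp at hab ⊢
      linear_combination hab
    have ha : a ∈ p := by
      show f a ∈ P
      rw [hfa]; exact P.mul_mem_left _ hxP
    have ha0 : a ≠ 0 := by
      intro h
      apply hx0
      have : ((x : S) : K) = 0 := by
        have := hab
        rw [h, map_zero, zero_div] at this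
        exact this.symm
      exact Subtype.ext this
    intro h
    rw [h] at ha
    exact ha0 (Ideal.mem_bot.mp ha)
  haveI hmax : p.IsMaximal := Ideal.IsPrime.isMaximal hp_prime hp0
  have hle : p.primeCompl ≤ R⁰ := p.primeCompl_le_nonZeroDivisors
  set Rp : Subalgebra R K := Localization.subalgebra.ofField K p.primeCompl hle with hRp
  have mem_Rp : ∀ x : K, x ∈ Rp ↔
      ∃ (a s : R) (_ : s ∈ p.primeCompl),
        x = algebraMap R K a * (algebraMap R K s)⁻¹ := fun x => Iff.rfl
  haveI : IsDiscreteValuationRing Rp :=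
    IsLocalization.AtPrime.isDiscreteValuationRing_of_dedekind_domain R hp0 Rp
  -- key claim: S ⊆ Rp inside K
  have hSRp : ∀ s : S, (s : K) ∈ Rp := by
    intro s
    by_cases hs0 : (s : K) = 0
    · rw [hs0]; exact Rp.zero_mem
    rcases ValuationRing.isInteger_or_isInteger Rp ((s : K)) with h | h
    · obtain ⟨y, hy⟩ := h
      rw [← hy]; exact y.2
    · obtain ⟨y, hy⟩ := h
      have hyRp : ((s : K))⁻¹ ∈ Rp := by rw [← hy]; exact y.2
      obtain ⟨a, m, hm, hrep⟩ := (mem_Rp _).mp hyRp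
      by_cases hap : a ∈ p
      · exfalso
        -- then α m = α a * s, so m ∈ p, contradiction
        have hmeq : f m = f a * s := by
          apply Subtype.ext
          push_cast
          rw [hcoe, hcoe]
          have hm0' : algebraMap R K m ≠ 0 :=
            IsFractionRing.to_map_ne_zero_of_mem_nonZeroDivisors (hle hm)
          have h1 : ((s : K))⁻¹ * algebraMap R K m = algebraMap R K a := by
            rw [hrep]; field_simp
          calc algebraMap R K m = (s : K) * (((s : K))⁻¹ * algebraMap R K m) := by
                field_simp
            _ = algebraMap R K a * (s : K) := by rw [h1]; ring
        have : m ∈ p := by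
          show f m ∈ P
          rw [hmeq]
          exact P.mul_mem_right _ hap
        exact hm this
      · -- then s = α m * (α a)⁻¹ ∈ Rp
        refine (mem_Rp _).mpr ⟨m, a, hap, ?_⟩
        rw [← inv_inv ((s : K)), hrep, mul_inv_rev, inv_inv, mul_comm]
  -- conclude
  apply le_antisymm (Ideal.map_comap_le)
  intro x hx
  obtain ⟨a, m, hm, hrep⟩ := (mem_Rp _).mp (hSRp x)
  have hm0 : algebraMap R K m ≠ 0 :=
    IsFractionRing.to_map_ne_zero_of_mem_nonZeroDivisors (hle hm)
  have hma : f m * x = f a := by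
    apply Subtype.ext
    push_cast
    rw [hcoe, hcoe]
    rw [hrep]; field_simp
  have ha : a ∈ p := by
    show f a ∈ P
    rw [← hma]; exact P.mul_mem_left _ hx
  obtain ⟨r, q, hq, hrq⟩ := hmax.exists_inv (show m ∉ p from hm)
  have hxeq : x = f (r * a) + f q * x := by
    have h1 : x = f (r * m + q) * x := by
      rw [hrq, map_one, one_mul]
    calc x = f (r * m + q) * x := h1
      _ = f r * (f m * x) + f q * x := by rw [map_add, map_mul]; ring
      _ = f (r * a) + f q * x := by rw [hma, map_mul]
  rw [hxeq]
  exact Ideal.add_mem _ (Ideal.mem_map_of_mem f (p.mul_mem_left r ha))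
    (Ideal.mul_mem_right _ _ (Ideal.mem_map_of_mem f hq))
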